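/- Let S² = {s ∈ ℝ³ : |s| = 1} with its standard surface measure dσ, let R ⊆ ℝ³ be a measurable set with the Lebesgue measure, and D = R × S² with the product measure. Let k : R × [−1,1] → ℝ and σ_t : R → ℝ be measurable, set σ_s(r) = ∫_{S²} k(r, s·s') dσ(s') and σ_a = σ_t − σ_s, and assume 0 ≤ k(r,μ) ≤ k̄ for all r,μ and 0 < σ̲_a ≤ σ_a(r) ≤ σ̄_a for all r. Define the collision operator (Cφ)(r,s) = σ_t(r)φ(r,s) − ∫_{S²} k(r, s·s') φ(r,s') dσ(s'). Then for every φ ∈ L²(D): Cφ ∈ L²(D) and ∫_D (Cφ)(r,s) φ(r,s) d(r,s) ≥ σ̲_a ∫_D |φ(r,s)|² d(r,s). -/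

import Mathlib

open MeasureTheory
open scoped RealInnerProductSpace

theorem ae_fst_of_ae {α β : Type*} [MeasurableSpace α] [MeasurableSpace β]
    (μ0 : Measure α) (ν : Measure β) [SFinite ν] {P : α → Prop} (h : ∀ᵐ r ∂μ0, P r) :
    ∀ᵐ p ∂(μ0.prod ν), P p.1 := by
  rw [Filter.eventually_iff, mem_ae_iff] at h ⊢
  obtain ⟨t, hsub, htm, ht0⟩ := exists_measurable_superset_of_null h
  refine measure_mono_null (t := t ×ˢ Set.univ) ?_ ?_
  · intro p hp; exact ⟨hsub hp, Set.mem_univ _⟩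
  · rw [Measure.prod_prod, ht0, zero_mul]

theorem integrable_mul_of_memL2 {α : Type*} [MeasurableSpace α] {μ : Measure α} {f g : α → ℝ}
    (hf : MemLp f 2 μ) (hg : MemLp g 2 μ) : Integrable (fun x => f x * g x) μ := by
  refine ((hf.integrable_sq.add hg.integrable_sq).div_const 2).mono' (hf.1.mul hg.1) ?_
  filter_upwards with x
  simp only [Pi.add_apply]
  rw [Real.norm_eq_abs, abs_mul]
  nlinarith [sq_nonneg (|f x| - |g x|), sq_abs (f x), sq_abs (g x), abs_nonneg (f x), abs_nonneg (g x)]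

theorem sq_integral_norm_le {β : Type*} [MeasurableSpace β] {ν : Measure β} [IsFiniteMeasure ν]
    {h : β → ℝ} (hh : MemLp h 2 ν) :
    (∫ s, ‖h s‖ ∂ν) ^ 2 ≤ (ν Set.univ).toReal * ∫ s, h s ^ 2 ∂ν := by
  have hpq : (2:ℝ).HolderConjugate 2 := Real.HolderConjugate.two_two
  have h2 : ENNReal.ofReal (2:ℝ) = 2 := by norm_num
  have h1 := integral_mul_norm_le_Lp_mul_Lq (μ := ν) hpq (by rw [h2]; exact hh) (by rw [h2]; exact memLp_const (1:ℝ))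
  simp only [norm_one, mul_one, one_pow] at h1
  have e1 : ∫ s, ‖h s‖ ^ (2:ℝ) ∂ν = ∫ s, h s ^ 2 ∂ν := by
    refine integral_congr_ae (.of_forall fun s => ?_)
    beta_reduce
    rw [show ((2:ℝ)) = ((2:ℕ):ℝ) by norm_num, Real.rpow_natCast, Real.norm_eq_abs, sq_abs]
  have e2 : ∫ s, (1:ℝ) ^ (2:ℝ) ∂ν = (ν Set.univ).toReal := by
    simp [measureReal_def]
  rw [e1, e2] at h1
  have hnn : (0:ℝ) ≤ ∫ s, h s ^ 2 ∂ν := integral_nonneg fun s => sq_nonneg _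
  have hnn2 : (0:ℝ) ≤ (ν Set.univ).toReal := ENNReal.toReal_nonneg
  calc (∫ s, ‖h s‖ ∂ν) ^ 2 ≤ ((∫ s, h s ^ 2 ∂ν) ^ (1/(2:ℝ)) * ((ν Set.univ).toReal) ^ (1/(2:ℝ))) ^ 2 := by
        apply pow_le_pow_left₀ (integral_nonneg fun s => norm_nonneg _) h1
    _ = (ν Set.univ).toReal * ∫ s, h s ^ 2 ∂ν := by
        rw [mul_pow, ← Real.rpow_natCast ((∫ s, h s ^ 2 ∂ν) ^ (1/(2:ℝ))) 2,
          ← Real.rpow_natCast (((ν Set.univ).toReal) ^ (1/(2:ℝ))) 2,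
          ← Real.rpow_mul hnn, ← Real.rpow_mul hnn2]
        norm_num [mul_comm]

theorem collision_aux {α β : Type*} [MeasurableSpace α] [MeasurableSpace β] [Nonempty β]
    (μ0 : Measure α) (ν : Measure β) [SFinite μ0] [IsFiniteMeasure ν]
    (K : α × β × β → ℝ) (hK : Measurable K) (kbar : ℝ)
    (hKsymm : ∀ r s s', K (r, s, s') = K (r, s', s))
    (σt σs : α → ℝ) (hσt : Measurable σt)
    (hσs : ∀ᵐ r ∂μ0, ∀ s, σs r = ∫ s', K (r, s, s') ∂ν)
    (hKbd : ∀ᵐ r ∂μ0, ∀ s s', 0 ≤ K (r, s, s') ∧ K (r, s, s') ≤ kbar)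
    (σalo σahi : ℝ) (hσa0 : 0 < σalo)
    (hσab : ∀ᵐ r ∂μ0, σalo ≤ σt r - σs r ∧ σt r - σs r ≤ σahi)
    (φ : α → β → ℝ)
    (hφ : MemLp (fun p : α × β => φ p.1 p.2) 2 (μ0.prod ν)) :
    MemLp (fun p : α × β =>
      σt p.1 * φ p.1 p.2 - ∫ s', K (p.1, p.2, s') * φ p.1 s' ∂ν) 2 (μ0.prod ν) ∧
    σalo * (∫ p, (φ p.1 p.2) ^ 2 ∂(μ0.prod ν)) ≤
      ∫ p, (σt p.1 * φ p.1 p.2 - ∫ s', K (p.1, p.2, s') * φ p.1 s' ∂ν) * φ p.1 p.2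
        ∂(μ0.prod ν) := by
  set μ : Measure (α × β) := μ0.prod ν with hμdef
  set νU : ℝ := (ν Set.univ).toReal with hνU
  have hνU0 : 0 ≤ νU := ENNReal.toReal_nonneg
  obtain ⟨g, hg_sm, hgφ⟩ := hφ.1
  have hg_meas : Measurable g := hg_sm.measurable
  have hgL2 : MemLp g 2 μ := hφ.ae_eq hgφ
  have hg_sq : Integrable (fun p => g p ^ 2) μ := hgL2.integrable_sq
  -- kernel times g, as a function on (α × β) × β
  have hKq : Measurable fun q : (α × β) × β => K (q.1.1, q.1.2, q.2) :=
    hK.comp ((measurable_fst.comp measurable_fst).prodMk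
      ((measurable_snd.comp measurable_fst).prodMk measurable_snd))
  have hgq : Measurable fun q : (α × β) × β => g (q.1.1, q.2) :=
    hg_meas.comp ((measurable_fst.comp measurable_fst).prodMk measurable_snd)
  set F : α × β → ℝ := fun p => ∫ s', K (p.1, p.2, s') * g (p.1, s') ∂ν with hFdef
  have hF_sm : StronglyMeasurable F :=
    (hKq.mul hgq).stronglyMeasurable.integral_prod_right'
  set S : α × β → ℝ := fun p => ∫ s', K (p.1, p.2, s') ∂ν with hSdef
  have hS_sm : StronglyMeasurable S := hKq.stronglyMeasurable.integral_prod_right'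
  -- good points
  have hgood : ∀ᵐ r ∂μ0, (∀ s, σs r = ∫ s', K (r, s, s') ∂ν) ∧
      (∀ s s', 0 ≤ K (r, s, s') ∧ K (r, s, s') ≤ kbar) ∧
      MemLp (fun s => g (r, s)) 2 ν ∧
      (σalo ≤ σt r - σs r ∧ σt r - σs r ≤ σahi) := by
    filter_upwards [hσs, hKbd, hσab, hg_sq.prod_right_ae] with r h1 h2 h3 h4
    refine ⟨h1, h2, ?_, h3⟩
    have hm : AEStronglyMeasurable (fun s => g (r, s)) ν :=
      (hg_meas.comp (measurable_const.prodMk measurable_id)).aestronglyMeasurable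
    exact (memLp_two_iff_integrable_sq hm).2 h4
  -- the main per-r facts
  have key : ∀ᵐ r ∂μ0,
      Integrable (fun s => F (r, s) ^ 2) ν ∧
      (∫ s, F (r, s) ^ 2 ∂ν ≤ (νU * kbar) ^ 2 * ∫ s, g (r, s) ^ 2 ∂ν) ∧
      (∫ s, F (r, s) * g (r, s) ∂ν ≤ σs r * ∫ s, g (r, s) ^ 2 ∂ν) ∧
      (∀ s, S (r, s) = σs r) ∧ (0 ≤ σs r ∧ σs r ≤ kbar * νU) := by
    filter_upwards [hgood] with r hr
    obtain ⟨h1, h2, h3, _⟩ := hr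
    have hhm : Measurable fun s => g (r, s) :=
      hg_meas.comp (measurable_const.prodMk measurable_id)
    have hh1 : Integrable (fun s => g (r, s)) ν := h3.integrable one_le_two
    have hh2 : Integrable (fun s => g (r, s) ^ 2) ν := h3.integrable_sq
    have hKm : ∀ s, Measurable fun s' => K (r, s, s') := fun s =>
      hK.comp (measurable_const.prodMk (measurable_const.prodMk measurable_id))
    have hkbar0 : 0 ≤ kbar := le_trans (h2 (Classical.arbitrary β) (Classical.arbitrary β)).1
      (h2 _ _).2
    have hKint : ∀ s, Integrable (fun s' => K (r, s, s')) ν := fun s =>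
      (integrable_const kbar).mono' (hKm s).aestronglyMeasurable
        (Filter.Eventually.of_forall fun s' => by
          rw [Real.norm_eq_abs, abs_of_nonneg (h2 s s').1]; exact (h2 s s').2)
    have hKg_int : ∀ s, Integrable (fun s' => K (r, s, s') * g (r, s')) ν := fun s =>
      ((hh1.norm).const_mul kbar).mono' ((hKm s).mul hhm).aestronglyMeasurable
        (Filter.Eventually.of_forall fun s' => by
          rw [norm_mul]
          exact mul_le_mul_of_nonneg_right
            (by rw [Real.norm_eq_abs, abs_of_nonneg (h2 s s').1]; exact (h2 s s').2)
            (norm_nonneg _))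
    have hFb : ∀ s, |F (r, s)| ≤ kbar * ∫ s', ‖g (r, s')‖ ∂ν := fun s => by
      calc |F (r, s)| ≤ ∫ s', ‖K (r, s, s') * g (r, s')‖ ∂ν := by
            rw [← Real.norm_eq_abs]
            exact norm_integral_le_integral_norm _
        _ ≤ ∫ s', kbar * ‖g (r, s')‖ ∂ν := by
            refine integral_mono (hKg_int s).norm ((hh1.norm).const_mul kbar) fun s' => ?_
            rw [norm_mul]
            exact mul_le_mul_of_nonneg_right
              (by rw [Real.norm_eq_abs, abs_of_nonneg (h2 s s').1]; exact (h2 s s').2)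
              (norm_nonneg _)
        _ = kbar * ∫ s', ‖g (r, s')‖ ∂ν := integral_const_mul _ _
    have hFb0 : ∀ s, (0:ℝ) ≤ kbar * ∫ s', ‖g (r, s')‖ ∂ν := fun s =>
      le_trans (abs_nonneg _) (hFb s)
    have hFsq : ∀ s, F (r, s) ^ 2 ≤ (kbar * ∫ s', ‖g (r, s')‖ ∂ν) ^ 2 := fun s => by
      rw [← sq_abs]
      exact pow_le_pow_left₀ (abs_nonneg _) (hFb s) 2
    have hFrm : Measurable fun s => F (r, s) :=
      hF_sm.measurable.comp (measurable_prodMk_left)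
    have P1 : Integrable (fun s => F (r, s) ^ 2) ν := by
      refine (integrable_const ((kbar * ∫ s', ‖g (r, s')‖ ∂ν) ^ 2)).mono'
        ((hFrm.pow_const 2).aestronglyMeasurable) (Filter.Eventually.of_forall fun s => ?_)
      rw [Real.norm_eq_abs, abs_of_nonneg (sq_nonneg _)]
      exact hFsq s
    have hCS := sq_integral_norm_le h3
    have P2 : ∫ s, F (r, s) ^ 2 ∂ν ≤ (νU * kbar) ^ 2 * ∫ s, g (r, s) ^ 2 ∂ν := by
      calc ∫ s, F (r, s) ^ 2 ∂ν ≤ ∫ _s, (kbar * ∫ s', ‖g (r, s')‖ ∂ν) ^ 2 ∂ν :=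
            integral_mono P1 (integrable_const _) hFsq
        _ = νU * (kbar * ∫ s', ‖g (r, s')‖ ∂ν) ^ 2 := by rw [integral_const, smul_eq_mul, measureReal_def]
        _ = νU * kbar ^ 2 * (∫ s', ‖g (r, s')‖ ∂ν) ^ 2 := by ring
        _ ≤ νU * kbar ^ 2 * (νU * ∫ s, g (r, s) ^ 2 ∂ν) := by
            refine mul_le_mul_of_nonneg_left hCS (by positivity)
        _ = (νU * kbar) ^ 2 * ∫ s, g (r, s) ^ 2 ∂ν := by ring
    -- Fubini part
    have hz_meas : Measurable fun z : β × β => K (r, z.1, z.2) * g (r, z.2) ^ 2 :=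
      (hK.comp (measurable_const.prodMk (measurable_fst.prodMk measurable_snd))).mul
        ((hhm.comp measurable_snd).pow_const 2)
    have hKh2_int_s' : ∀ s, Integrable (fun s' => K (r, s, s') * g (r, s') ^ 2) ν := fun s =>
      (hh2.const_mul kbar).mono' ((hKm s).mul (hhm.pow_const 2)).aestronglyMeasurable
        (Filter.Eventually.of_forall fun s' => by
          rw [norm_mul, Real.norm_eq_abs, Real.norm_eq_abs, abs_of_nonneg (h2 s s').1,
            abs_of_nonneg (sq_nonneg _)]
          exact mul_le_mul_of_nonneg_right (h2 s s').2 (sq_nonneg _))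
    have hKh2_prod : Integrable (fun z : β × β => K (r, z.1, z.2) * g (r, z.2) ^ 2) (ν.prod ν) := by
      refine (integrable_prod_iff hz_meas.aestronglyMeasurable).2
        ⟨Filter.Eventually.of_forall fun s => hKh2_int_s' s, ?_⟩
      refine (integrable_const (kbar * ∫ s', g (r, s') ^ 2 ∂ν)).mono'
        ((hz_meas.norm.stronglyMeasurable.integral_prod_right').aestronglyMeasurable)
        (Filter.Eventually.of_forall fun s => ?_)
      rw [Real.norm_eq_abs, abs_of_nonneg (integral_nonneg fun s' => norm_nonneg _)]
      calc ∫ s', ‖K (r, s, s') * g (r, s') ^ 2‖ ∂ν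
          ≤ ∫ s', kbar * g (r, s') ^ 2 ∂ν := by
            refine integral_mono (hKh2_int_s' s).norm (hh2.const_mul kbar) fun s' => ?_
            rw [norm_mul, Real.norm_eq_abs, Real.norm_eq_abs, abs_of_nonneg (h2 s s').1,
              abs_of_nonneg (sq_nonneg _)]
            exact mul_le_mul_of_nonneg_right (h2 s s').2 (sq_nonneg _)
        _ = kbar * ∫ s', g (r, s') ^ 2 ∂ν := integral_const_mul _ _
    have hswap : ∫ s, (∫ s', K (r, s, s') * g (r, s') ^ 2 ∂ν) ∂ν
        = σs r * ∫ s, g (r, s) ^ 2 ∂ν := by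
      rw [integral_integral_swap hKh2_prod]
      have e : ∀ s', (∫ s, K (r, s, s') * g (r, s') ^ 2 ∂ν) = σs r * g (r, s') ^ 2 := fun s' => by
        rw [integral_mul_const]
        have : (fun s => K (r, s, s')) = fun s => K (r, s', s) := funext fun s => hKsymm r s s'
        rw [this, ← h1 s', mul_comm]
      simp_rw [e]
      rw [integral_const_mul]
    have hpt : ∀ s, F (r, s) * g (r, s) ≤
        (σs r * g (r, s) ^ 2 + ∫ s', K (r, s, s') * g (r, s') ^ 2 ∂ν) / 2 := fun s => by
      have e1 : F (r, s) * g (r, s) = ∫ s', K (r, s, s') * g (r, s') * g (r, s) ∂ν :=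
        (integral_mul_const _ _).symm
      rw [e1]
      have int1 : Integrable (fun s' => K (r, s, s') * g (r, s') * g (r, s)) ν :=
        (hKg_int s).mul_const _
      have int2a : Integrable (fun s' => K (r, s, s') * g (r, s) ^ 2) ν :=
        (hKint s).mul_const _
      have int2 : Integrable
          (fun s' => (K (r, s, s') * g (r, s) ^ 2 + K (r, s, s') * g (r, s') ^ 2) / 2) ν :=
        (int2a.add (hKh2_int_s' s)).div_const 2
      calc ∫ s', K (r, s, s') * g (r, s') * g (r, s) ∂ν
          ≤ ∫ s', (K (r, s, s') * g (r, s) ^ 2 + K (r, s, s') * g (r, s') ^ 2) / 2 ∂ν := by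
            refine integral_mono int1 int2 fun s' => ?_
            have hK0 := (h2 s s').1
            nlinarith [mul_nonneg hK0 (sq_nonneg (g (r, s) - g (r, s')))]
        _ = (σs r * g (r, s) ^ 2 + ∫ s', K (r, s, s') * g (r, s') ^ 2 ∂ν) / 2 := by
            rw [integral_div, integral_add int2a (hKh2_int_s' s), integral_mul_const, ← h1 s]
    have intF : Integrable (fun s => F (r, s) * g (r, s)) ν := by
      refine ((hh1.norm).const_mul (kbar * ∫ s', ‖g (r, s')‖ ∂ν)).mono'
        ((hFrm.mul hhm).aestronglyMeasurable) (Filter.Eventually.of_forall fun s => ?_)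
      rw [norm_mul]
      exact mul_le_mul_of_nonneg_right (by rw [Real.norm_eq_abs]; exact hFb s) (norm_nonneg _)
    have intRHS : Integrable
        (fun s => (σs r * g (r, s) ^ 2 + ∫ s', K (r, s, s') * g (r, s') ^ 2 ∂ν) / 2) ν :=
      ((hh2.const_mul (σs r)).add hKh2_prod.integral_prod_left).div_const 2
    have P4 : ∫ s, F (r, s) * g (r, s) ∂ν ≤ σs r * ∫ s, g (r, s) ^ 2 ∂ν := by
      calc ∫ s, F (r, s) * g (r, s) ∂ν
          ≤ ∫ s, (σs r * g (r, s) ^ 2 + ∫ s', K (r, s, s') * g (r, s') ^ 2 ∂ν) / 2 ∂ν :=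
            integral_mono intF intRHS hpt
        _ = ((σs r * ∫ s, g (r, s) ^ 2 ∂ν) + σs r * ∫ s, g (r, s) ^ 2 ∂ν) / 2 := by
            rw [integral_div, integral_add (hh2.const_mul (σs r)) hKh2_prod.integral_prod_left,
              integral_const_mul, hswap]
        _ = σs r * ∫ s, g (r, s) ^ 2 ∂ν := by ring
    have P5 : ∀ s, S (r, s) = σs r := fun s => (h1 s).symm
    have hσs0 : 0 ≤ σs r := by
      rw [h1 (Classical.arbitrary β)]
      exact integral_nonneg fun s' => (h2 _ s').1
    have hσsU : σs r ≤ kbar * νU := by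
      rw [h1 (Classical.arbitrary β)]
      calc ∫ s', K (r, Classical.arbitrary β, s') ∂ν ≤ ∫ _s', kbar ∂ν :=
            integral_mono (hKint _) (integrable_const _) fun s' => (h2 _ s').2
        _ = kbar * νU := by rw [integral_const, smul_eq_mul, mul_comm, measureReal_def]
    exact ⟨P1, P2, P4, P5, hσs0, hσsU⟩
  -- F is in L²
  have hF_L2 : MemLp F 2 μ := by
    rw [memLp_two_iff_integrable_sq hF_sm.aestronglyMeasurable]
    refine (integrable_prod_iff ((hF_sm.measurable.pow_const 2).aestronglyMeasurable)).2
      ⟨?_, ?_⟩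
    · filter_upwards [key] with r hr using hr.1
    · refine ((hg_sq.integral_prod_left).const_mul ((νU * kbar) ^ 2)).mono' ?_ ?_
      · exact (((hF_sm.measurable.pow_const 2).norm.stronglyMeasurable).integral_prod_right').aestronglyMeasurable
      · filter_upwards [key] with r hr
        have e : ∫ s, ‖F (r, s) ^ 2‖ ∂ν = ∫ s, F (r, s) ^ 2 ∂ν :=
          integral_congr_ae (Filter.Eventually.of_forall fun s =>
            Real.norm_of_nonneg (sq_nonneg _))
        rw [Real.norm_eq_abs]
        rw [abs_of_nonneg (integral_nonneg fun s => norm_nonneg _)]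
        rw [e]
        exact hr.2.1
  -- σt ∘ fst is a.e. bounded, so σt·g ∈ L²
  have hσtM : ∀ᵐ r ∂μ0, |σt r| ≤ σahi + kbar * νU := by
    filter_upwards [hσab, key] with r h4 hr
    have h5 := hr.2.2.2.2
    rw [abs_le]; constructor <;> nlinarith [h4.1, h4.2, h5.1, h5.2]
  have hσtg : MemLp (fun p : α × β => σt p.1 * g p) 2 μ := by
    refine hgL2.of_le_mul (c := σahi + kbar * νU) (((hσt.comp measurable_fst).aestronglyMeasurable).mul hgL2.1) ?_
    filter_upwards [ae_fst_of_ae μ0 ν hσtM] with p hp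
    rw [norm_mul]
    exact mul_le_mul_of_nonneg_right (by rw [Real.norm_eq_abs]; exact hp) (norm_nonneg _)
  have hCg : MemLp (fun p : α × β => σt p.1 * g p - F p) 2 μ := hσtg.sub hF_L2
  -- a.e. identification of the collision expression with its measurable version
  have heq : (fun p : α × β => σt p.1 * φ p.1 p.2 - ∫ s', K (p.1, p.2, s') * φ p.1 s' ∂ν)
      =ᵐ[μ] fun p => σt p.1 * g p - F p := by
    have h1 : ∀ᵐ r ∂μ0, ∀ s,
        (∫ s', K (r, s, s') * φ r s' ∂ν) = ∫ s', K (r, s, s') * g (r, s') ∂ν := by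
      filter_upwards [Measure.ae_ae_of_ae_prod hgφ] with r hr
      refine fun s => integral_congr_ae ?_
      filter_upwards [hr] with s' hs'
      rw [hs']
    filter_upwards [hgφ, ae_fst_of_ae μ0 ν h1] with p hp1 hp2
    beta_reduce
    rw [hp1, hp2 p.2]
  refine ⟨hCg.ae_eq heq.symm, ?_⟩
  -- integrability of products
  have hFg_int : Integrable (fun p => F p * g p) μ := integrable_mul_of_memL2 hF_L2 hgL2
  have hσtg2_int : Integrable (fun p : α × β => σt p.1 * g p * g p) μ :=
    integrable_mul_of_memL2 hσtg hgL2
  have hSbd : ∀ᵐ p ∂μ, |S p| ≤ kbar * νU := by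
    have : ∀ᵐ r ∂μ0, ∀ s, |S (r, s)| ≤ kbar * νU := by
      filter_upwards [key] with r hr
      intro s
      rw [hr.2.2.2.1 s, abs_of_nonneg hr.2.2.2.2.1]
      exact hr.2.2.2.2.2
    filter_upwards [ae_fst_of_ae μ0 ν this] with p hp using hp p.2
  have hSg2_int : Integrable (fun p => S p * g p ^ 2) μ := by
    refine (hg_sq.const_mul (kbar * νU)).mono'
      (hS_sm.aestronglyMeasurable.mul ((hg_meas.pow_const 2).aestronglyMeasurable)) ?_
    filter_upwards [hSbd] with p hp
    rw [norm_mul, Real.norm_eq_abs (S p), Real.norm_eq_abs (g p ^ 2), abs_of_nonneg (sq_nonneg (g p))]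
    exact mul_le_mul_of_nonneg_right hp (sq_nonneg _)
  have hTg2_int : Integrable (fun p : α × β => (σt p.1 - S p) * g p ^ 2) μ := by
    have hs : Integrable (fun p : α × β => σt p.1 * g p * g p - S p * g p ^ 2) μ :=
      hσtg2_int.sub hSg2_int
    refine hs.congr (Filter.Eventually.of_forall fun p => ?_)
    beta_reduce
    ring
  -- ∫ F g ≤ ∫ S g²
  have hmain : ∫ p, F p * g p ∂μ ≤ ∫ p, S p * g p ^ 2 ∂μ := by
    rw [hμdef, integral_prod _ hFg_int, integral_prod _ hSg2_int]
    refine integral_mono_ae hFg_int.integral_prod_left hSg2_int.integral_prod_left ?_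
    filter_upwards [key] with r hr
    calc ∫ s, F (r, s) * g (r, s) ∂ν ≤ σs r * ∫ s, g (r, s) ^ 2 ∂ν := hr.2.2.1
      _ = ∫ s, S (r, s) * g (r, s) ^ 2 ∂ν := by
          rw [← integral_const_mul]
          refine integral_congr_ae (Filter.Eventually.of_forall fun s => ?_)
          beta_reduce
          rw [hr.2.2.2.1 s]
  -- σa part
  have hTlow : σalo * ∫ p, g p ^ 2 ∂μ ≤ ∫ p, (σt p.1 - S p) * g p ^ 2 ∂μ := by
    rw [← integral_const_mul]
    refine integral_mono_ae (hg_sq.const_mul σalo) hTg2_int ?_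
    have hlow : ∀ᵐ r ∂μ0, ∀ s, σalo ≤ σt r - S (r, s) := by
      filter_upwards [key, hσab] with r hr h4
      intro s
      rw [hr.2.2.2.1 s]
      exact h4.1
    filter_upwards [ae_fst_of_ae μ0 ν hlow] with p hp
    exact mul_le_mul_of_nonneg_right (hp p.2) (sq_nonneg _)
  -- split the integral
  have hsplit : ∫ p, (σt p.1 * g p - F p) * g p ∂μ
      = (∫ p, (σt p.1 - S p) * g p ^ 2 ∂μ) + ((∫ p, S p * g p ^ 2 ∂μ) - ∫ p, F p * g p ∂μ) := by
    have hsub : Integrable (fun p : α × β => S p * g p ^ 2 - F p * g p) μ :=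
      hSg2_int.sub hFg_int
    rw [← integral_sub hSg2_int hFg_int, ← integral_add hTg2_int hsub]
    refine integral_congr_ae (Filter.Eventually.of_forall fun p => ?_)
    beta_reduce
    ring
  have hφ2 : ∫ p, (φ p.1 p.2) ^ 2 ∂μ = ∫ p, g p ^ 2 ∂μ := by
    refine integral_congr_ae ?_
    filter_upwards [hgφ] with p hp
    beta_reduce
    rw [hp]
  have hint2 : ∫ p, (σt p.1 * φ p.1 p.2 - ∫ s', K (p.1, p.2, s') * φ p.1 s' ∂ν) * φ p.1 p.2 ∂μ
      = ∫ p, (σt p.1 * g p - F p) * g p ∂μ := by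
    refine integral_congr_ae ?_
    filter_upwards [heq, hgφ] with p h1 h2
    beta_reduce
    rw [h1, h2]
  rw [hφ2, hint2, hsplit]
  linarith [hmain, hTlow]

noncomputable abbrev E3 : Type := EuclideanSpace ℝ (Fin 3)
abbrev Sph : Type := Metric.sphere (0 : E3) 1

/-- The standard surface measure on the unit sphere S² ⊂ ℝ³. -/
noncomputable def sphMeasure : Measure Sph := (volume : Measure E3).toSphere

instance : IsFiniteMeasure sphMeasure := by
  unfold sphMeasure; infer_instance

instance : Nonempty Sph :=
  (NormedSpace.sphere_nonempty.mpr zero_le_one).to_subtype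

/-- Coercivity of the collision operator (Cφ)(r,s) = σₜ(r)φ(r,s) − ∫ k(r,s·s')φ(r,s')dσ(s')
on L²(D), D = R × S²: Cφ ∈ L²(D) and (Cφ, φ) ≥ σ̲ₐ ‖φ‖²_{L²(D)}. -/
theorem stmt_10
    (R : Set E3) (hR : MeasurableSet R)
    (k : E3 → ℝ → ℝ) (σt : E3 → ℝ)
    (hk_meas : Measurable (Function.uncurry k)) (hσt_meas : Measurable σt)
    (σs σa : E3 → ℝ)
    (hσs : ∀ r ∈ R, ∀ s : Sph, σs r = ∫ s' : Sph, k r ⟪(s : E3), (s' : E3)⟫ ∂sphMeasure)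
    (hσa : ∀ r : E3, σa r = σt r - σs r)
    (kbar σalo σahi : ℝ) (hkbar : 0 ≤ kbar)
    (hk : ∀ r ∈ R, ∀ μ ∈ Set.Icc (-1 : ℝ) 1, 0 ≤ k r μ ∧ k r μ ≤ kbar)
    (hσa0 : 0 < σalo) (hσaa : σalo ≤ σahi) (hσab : ∀ r ∈ R, σalo ≤ σa r ∧ σa r ≤ σahi)
    (φ : E3 → Sph → ℝ)
    (hφ : MemLp (fun p : E3 × Sph => φ p.1 p.2) 2
      (((volume : Measure E3).restrict R).prod sphMeasure)) :
    MemLp (fun p : E3 × Sph =>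
        σt p.1 * φ p.1 p.2 - ∫ s' : Sph, k p.1 ⟪(p.2 : E3), (s' : E3)⟫ * φ p.1 s' ∂sphMeasure) 2
      (((volume : Measure E3).restrict R).prod sphMeasure) ∧
    σalo * (∫ p : E3 × Sph, (φ p.1 p.2) ^ 2
        ∂(((volume : Measure E3).restrict R).prod sphMeasure)) ≤
      ∫ p : E3 × Sph,
        (σt p.1 * φ p.1 p.2 -
            ∫ s' : Sph, k p.1 ⟪(p.2 : E3), (s' : E3)⟫ * φ p.1 s' ∂sphMeasure) * φ p.1 p.2
        ∂(((volume : Measure E3).restrict R).prod sphMeasure) := by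
  have hKmeas : Measurable fun q : E3 × Sph × Sph => k q.1 ⟪(q.2.1 : E3), (q.2.2 : E3)⟫ := by
    have hc : Continuous fun q : E3 × Sph × Sph => (⟪(q.2.1 : E3), (q.2.2 : E3)⟫ : ℝ) :=
      Continuous.inner (continuous_subtype_val.comp (continuous_fst.comp continuous_snd))
        (continuous_subtype_val.comp (continuous_snd.comp continuous_snd))
    exact hk_meas.comp (measurable_fst.prodMk hc.measurable)
  have hnorm : ∀ s : Sph, ‖(s : E3)‖ = 1 := fun s => mem_sphere_zero_iff_norm.1 s.2
  have hsymm : ∀ (r : E3) (s s' : Sph),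
      k r ⟪(s : E3), (s' : E3)⟫ = k r ⟪(s' : E3), (s : E3)⟫ := fun r s s' => by
    rw [real_inner_comm]
  have hσs' : ∀ᵐ r ∂((volume : Measure E3).restrict R), ∀ s : Sph,
      σs r = ∫ s' : Sph, k r ⟪(s : E3), (s' : E3)⟫ ∂sphMeasure := by
    filter_upwards [ae_restrict_mem hR] with r hr using hσs r hr
  have hKbd : ∀ᵐ r ∂((volume : Measure E3).restrict R), ∀ s s' : Sph,
      0 ≤ k r ⟪(s : E3), (s' : E3)⟫ ∧ k r ⟪(s : E3), (s' : E3)⟫ ≤ kbar := by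
    filter_upwards [ae_restrict_mem hR] with r hr
    intro s s'
    refine hk r hr _ ?_
    have h1 := abs_real_inner_le_norm (s : E3) (s' : E3)
    rw [hnorm s, hnorm s', one_mul] at h1
    exact Set.mem_Icc.2 (abs_le.1 h1)
  have hσab' : ∀ᵐ r ∂((volume : Measure E3).restrict R),
      σalo ≤ σt r - σs r ∧ σt r - σs r ≤ σahi := by
    filter_upwards [ae_restrict_mem hR] with r hr
    have h := hσab r hr
    rwa [hσa r] at h
  exact collision_aux ((volume : Measure E3).restrict R) sphMeasure
    (fun q : E3 × Sph × Sph => k q.1 ⟪(q.2.1 : E3), (q.2.2 : E3)⟫) hKmeas kbar hsymm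
    σt σs hσt_meas hσs' hKbd σalo σahi hσa0 hσab' φ hφ
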